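/- Let n be an odd positive integer. For every tournament T on n vertices there exists a set of n dice, each with n sides (a function X : Fin n → Fin n → ℕ), that realizes T. -/

import Mathlib

open Finset

section helpers

lemma card_filter_split (n : ℕ) (p : Fin (n+2) → Prop) [DecidablePred p] :
    (Finset.univ.filter p).card
      = ((Finset.univ : Finset (Fin n)).filter (fun a => p ⟨a.val, by omega⟩)).card
        + (if p ⟨n, by omega⟩ then 1 else 0) + (if p ⟨n+1, by omega⟩ then 1 else 0) := by
  rw [Finset.card_filter, Fin.sum_univ_castSucc, Fin.sum_univ_castSucc, Finset.card_filter]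
  rfl

lemma card_filter_Ico (n lo hi : ℕ) (h : hi ≤ n) :
    ((Finset.univ : Finset (Fin n)).filter fun a => lo ≤ a.val ∧ a.val < hi).card = hi - lo := by
  rw [← Nat.card_Ico lo hi]
  apply Finset.card_bij (fun a _ => a.val)
  · intro a ha; simp only [Finset.mem_filter] at ha; simp [Finset.mem_Ico]; omega
  · intro a _ b _ hab; exact Fin.ext hab
  · intro b hb; simp only [Finset.mem_Ico] at hb
    exact ⟨⟨b, by omega⟩, by simp; omega, rfl⟩

lemma card_filter_notIco (n lo hi : ℕ) (h : hi ≤ n) :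
    ((Finset.univ : Finset (Fin n)).filter fun a => ¬(lo ≤ a.val ∧ a.val < hi)).card
      = n - (hi - lo) := by
  have h1 := Finset.card_filter_add_card_filter_not
    (s := (Finset.univ : Finset (Fin n))) (p := fun a => lo ≤ a.val ∧ a.val < hi)
  rw [card_filter_Ico n lo hi h] at h1
  simp only [Finset.card_univ, Fintype.card_fin] at h1
  omega

lemma card_congr_helper {n : ℕ} (p q : Fin n → Prop) [DecidablePred p] [DecidablePred q]
    (h : ∀ a, p a ↔ q a) : (Finset.univ.filter p).card = (Finset.univ.filter q).card := by
  congr 1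
  exact Finset.filter_congr (fun x _ => h x)

end helpers

/-- block coefficient for voter A -/
def cA : Bool → Bool → ℕ
  | true, true => 1
  | true, false => 0
  | false, true => 3
  | false, false => 5

/-- block coefficient for voter B -/
def cB : Bool → Bool → ℕ
  | true, true => 2
  | true, false => 4
  | false, true => 1
  | false, false => 0

/-- the step voter construction, on natural-number indices -/
def sv (m : ℕ) (τ : Fin (2*m+1) → Fin (2*m+1) → ℕ) (tu tv : Fin (2*m+1) → Bool) (tuv : Bool)
    (a x : ℕ) : ℕ :=
  if ha : a < 2*m+1 then
    if hx : x < 2*m+1 then τ ⟨a, ha⟩ ⟨x, hx⟩ + 2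
    else if x = 2*m+1 then
      (if a < m then (Finset.univ.sup (τ ⟨a, ha⟩)) + 3 else if a < 2*m then 0
       else if tuv then 1 else 0)
    else
      (if a < m then 0 else if a < 2*m then (Finset.univ.sup (τ ⟨a, ha⟩)) + 3
       else if tuv then 0 else 1)
  else if a = 2*m+1 then
    (if hx : x < 2*m+1 then cA (tu ⟨x, hx⟩) (tv ⟨x, hx⟩) * (2*m+1) + x
     else if x = 2*m+1 then 2*(2*m+1) else 4*(2*m+1))
  else
    (if hx : x < 2*m+1 then cB (tu ⟨x, hx⟩) (tv ⟨x, hx⟩) * (2*m+1) + (2*m - x)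
     else if x = 2*m+1 then 6*(2*m+1) else 3*(2*m+1))

section evals
variable (m : ℕ) (τ : Fin (2*m+1) → Fin (2*m+1) → ℕ) (tu tv : Fin (2*m+1) → Bool) (tuv : Bool)

lemma sv_oo (a r : Fin (2*m+1)) : sv m τ tu tv tuv a.val r.val = τ a r + 2 := by
  simp [sv, a.isLt, r.isLt]

lemma sv_ou (a : Fin (2*m+1)) : sv m τ tu tv tuv a.val (2*m+1) =
    (if a.val < m then (Finset.univ.sup (τ a)) + 3 else if a.val < 2*m then 0
     else if tuv then 1 else 0) := by
  have h1 : ¬((2*m+1 : ℕ) < 2*m+1) := by omega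
  simp [sv, a.isLt, h1]

lemma sv_ov (a : Fin (2*m+1)) : sv m τ tu tv tuv a.val (2*m+2) =
    (if a.val < m then 0 else if a.val < 2*m then (Finset.univ.sup (τ a)) + 3
     else if tuv then 0 else 1) := by
  have h1 : ¬((2*m+2 : ℕ) < 2*m+1) := by omega
  have h2 : (2*m+2 : ℕ) ≠ 2*m+1 := by omega
  simp [sv, a.isLt, h1, h2]

lemma sv_Ao (r : Fin (2*m+1)) : sv m τ tu tv tuv (2*m+1) r.val =
    cA (tu r) (tv r) * (2*m+1) + r.val := by
  have h1 : ¬((2*m+1 : ℕ) < 2*m+1) := by omega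
  simp [sv, h1, r.isLt]

lemma sv_Au : sv m τ tu tv tuv (2*m+1) (2*m+1) = 2*(2*m+1) := by
  have h1 : ¬((2*m+1 : ℕ) < 2*m+1) := by omega
  simp [sv, h1]

lemma sv_Av : sv m τ tu tv tuv (2*m+1) (2*m+2) = 4*(2*m+1) := by
  have h1 : ¬((2*m+1 : ℕ) < 2*m+1) := by omega
  have h2 : ¬((2*m+2 : ℕ) < 2*m+1) := by omega
  have h3 : (2*m+2 : ℕ) ≠ 2*m+1 := by omega
  simp [sv, h1, h2, h3]

lemma sv_Bo (r : Fin (2*m+1)) : sv m τ tu tv tuv (2*m+2) r.val =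
    cB (tu r) (tv r) * (2*m+1) + (2*m - r.val) := by
  have h1 : ¬((2*m+2 : ℕ) < 2*m+1) := by omega
  have h2 : (2*m+2 : ℕ) ≠ 2*m+1 := by omega
  simp [sv, h1, h2, r.isLt]

lemma sv_Bu : sv m τ tu tv tuv (2*m+2) (2*m+1) = 6*(2*m+1) := by
  have h1 : ¬((2*m+2 : ℕ) < 2*m+1) := by omega
  have h2 : (2*m+2 : ℕ) ≠ 2*m+1 := by omega
  have h3 : ¬((2*m+1 : ℕ) < 2*m+1) := by omega
  simp [sv, h1, h2, h3]

lemma sv_Bv : sv m τ tu tv tuv (2*m+2) (2*m+2) = 3*(2*m+1) := by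
  have h1 : ¬((2*m+2 : ℕ) < 2*m+1) := by omega
  have h2 : (2*m+2 : ℕ) ≠ 2*m+1 := by omega
  simp [sv, h1, h2]

lemma AB_one (rv sval : ℕ) (hr : rv < 2*m+1) (hs : sval < 2*m+1) (hne : rv ≠ sval) :
    ((if cA (tu ⟨sval, hs⟩) (tv ⟨sval, hs⟩) * (2*m+1) + sval
          < cA (tu ⟨rv, hr⟩) (tv ⟨rv, hr⟩) * (2*m+1) + rv then 1 else 0) +
      (if cB (tu ⟨sval, hs⟩) (tv ⟨sval, hs⟩) * (2*m+1) + (2*m - sval)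
          < cB (tu ⟨rv, hr⟩) (tv ⟨rv, hr⟩) * (2*m+1) + (2*m - rv) then 1 else 0)) = 1 := by
  split_ifs <;>
  cases h1 : tu ⟨rv, hr⟩ <;> cases h2 : tv ⟨rv, hr⟩ <;>
    cases h3 : tu ⟨sval, hs⟩ <;> cases h4 : tv ⟨sval, hs⟩ <;>
    simp only [cA, cB, h1, h2, h3, h4] at * <;> omega

end evals

/-- `VP n`: every tournament on `n` vertices is the strict majority relation of `n`
ℕ-valued voters. -/
def VP (n : ℕ) : Prop :=
  ∀ T : Fin n → Fin n → Prop, (∀ i j : Fin n, i ≠ j → (T i j ↔ ¬ T j i)) →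
    ∃ σ : Fin n → Fin n → ℕ,
      ∀ i j : Fin n, i ≠ j →
        (T i j ↔ n < 2 * ((Finset.univ.filter (fun a => σ a j < σ a i)).card))

lemma vp_one : VP 1 := by
  intro T htot
  exact ⟨fun _ _ => 0, fun i j hij => absurd (Subsingleton.elim i j) hij⟩


lemma vp_step (m : ℕ) (ih : VP (2*m+1)) : VP (2*m+1+2) := by
  classical
  intro T htot
  have pU : 2*m+1 < 2*m+1+2 := by omega
  have pV : 2*m+2 < 2*m+1+2 := by omega
  obtain ⟨τ, hτ⟩ := ih (fun r s => T ⟨r.val, by omega⟩ ⟨s.val, by omega⟩)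
      (fun r s hrs => htot ⟨r.val, by omega⟩ ⟨s.val, by omega⟩
        (fun h => hrs (Fin.ext (by simpa using congrArg Fin.val h))))
  set tu : Fin (2*m+1) → Bool :=
    fun r => decide (T ⟨2*m+1, by omega⟩ ⟨r.val, by omega⟩) with htu
  set tv : Fin (2*m+1) → Bool :=
    fun r => decide (T ⟨2*m+2, by omega⟩ ⟨r.val, by omega⟩) with htv
  set tuv : Bool := decide (T ⟨2*m+1, by omega⟩ ⟨2*m+2, by omega⟩) with htuv
  refine ⟨fun a x => sv m τ tu tv tuv a.val x.val, ?_⟩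
  intro i j hij
  show T i j ↔ 2*m+1+2 < 2 * ((Finset.univ.filter
      (fun a : Fin (2*m+1+2) => sv m τ tu tv tuv a.val j.val < sv m τ tu tv tuv a.val i.val)).card)
  rw [card_filter_split (2*m+1)
      (fun a : Fin (2*m+1+2) => sv m τ tu tv tuv a.val j.val < sv m τ tu tv tuv a.val i.val)]
  simp only [Fin.val_mk]
  by_cases hi : i.val < 2*m+1
  · by_cases hj : j.val < 2*m+1
    · -- CASE 1 : both old vertices
      have hne : i.val ≠ j.val := fun h => hij (Fin.ext h)
      have hoo1 : ∀ a : Fin (2*m+1), sv m τ tu tv tuv a.val j.val = τ a ⟨j.val, hj⟩ + 2 :=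
        fun a => sv_oo m τ tu tv tuv a ⟨j.val, hj⟩
      have hoo2 : ∀ a : Fin (2*m+1), sv m τ tu tv tuv a.val i.val = τ a ⟨i.val, hi⟩ + 2 :=
        fun a => sv_oo m τ tu tv tuv a ⟨i.val, hi⟩
      have hAj : sv m τ tu tv tuv (2*m+1) j.val
          = cA (tu ⟨j.val, hj⟩) (tv ⟨j.val, hj⟩) * (2*m+1) + j.val :=
        sv_Ao m τ tu tv tuv ⟨j.val, hj⟩
      have hAi : sv m τ tu tv tuv (2*m+1) i.val
          = cA (tu ⟨i.val, hi⟩) (tv ⟨i.val, hi⟩) * (2*m+1) + i.val :=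
        sv_Ao m τ tu tv tuv ⟨i.val, hi⟩
      have hBj : sv m τ tu tv tuv (2*m+2) j.val
          = cB (tu ⟨j.val, hj⟩) (tv ⟨j.val, hj⟩) * (2*m+1) + (2*m - j.val) :=
        sv_Bo m τ tu tv tuv ⟨j.val, hj⟩
      have hBi : sv m τ tu tv tuv (2*m+2) i.val
          = cB (tu ⟨i.val, hi⟩) (tv ⟨i.val, hi⟩) * (2*m+1) + (2*m - i.val) :=
        sv_Bo m τ tu tv tuv ⟨i.val, hi⟩
      simp only [hoo1, hoo2, hAj, hAi, hBj, hBi]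
      rw [card_congr_helper _ (fun a => τ a ⟨j.val, hj⟩ < τ a ⟨i.val, hi⟩)
        (fun a => by omega)]
      have hT : T i j ↔ 2*m+1 <
          2 * ((Finset.univ.filter (fun a => τ a ⟨j.val, hj⟩ < τ a ⟨i.val, hi⟩)).card) :=
        hτ ⟨i.val, hi⟩ ⟨j.val, hj⟩ (fun h => hij (Fin.ext (by simpa using congrArg Fin.val h)))
      have hone := AB_one m tu tv i.val j.val hi hj hne
      rw [hT]
      split_ifs at hone ⊢ <;> omega
    · by_cases hj2 : j.val = 2*m+1
      · -- CASE 2 : i old, j = U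
        obtain rfl : j = (⟨2*m+1, pU⟩ : Fin (2*m+1+2)) := Fin.ext hj2
        simp only [Fin.val_mk]
        have hou : ∀ a : Fin (2*m+1), sv m τ tu tv tuv a.val (2*m+1) =
            (if a.val < m then (Finset.univ.sup (τ a)) + 3 else if a.val < 2*m then 0
             else if tuv then 1 else 0) := sv_ou m τ tu tv tuv
        have hoo2 : ∀ a : Fin (2*m+1), sv m τ tu tv tuv a.val i.val = τ a ⟨i.val, hi⟩ + 2 :=
          fun a => sv_oo m τ tu tv tuv a ⟨i.val, hi⟩
        have hAu : sv m τ tu tv tuv (2*m+1) (2*m+1) = 2*(2*m+1) := sv_Au m τ tu tv tuv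
        have hAi : sv m τ tu tv tuv (2*m+1) i.val
            = cA (tu ⟨i.val, hi⟩) (tv ⟨i.val, hi⟩) * (2*m+1) + i.val :=
          sv_Ao m τ tu tv tuv ⟨i.val, hi⟩
        have hBu : sv m τ tu tv tuv (2*m+2) (2*m+1) = 6*(2*m+1) := sv_Bu m τ tu tv tuv
        have hBi : sv m τ tu tv tuv (2*m+2) i.val
            = cB (tu ⟨i.val, hi⟩) (tv ⟨i.val, hi⟩) * (2*m+1) + (2*m - i.val) :=
          sv_Bo m τ tu tv tuv ⟨i.val, hi⟩
        simp only [hou, hoo2, hAu, hAi, hBu, hBi]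
        rw [card_congr_helper _ (fun a => m ≤ a.val ∧ a.val < 2*m+1) (fun a => by
          have hb := Finset.le_sup (f := τ a) (Finset.mem_univ (⟨i.val, hi⟩ : Fin (2*m+1)))
          have ha2 := a.isLt
          split_ifs <;> omega)]
        rw [card_filter_Ico _ _ _ (by omega)]
        have e1 : tu ⟨i.val, hi⟩ = decide (T (⟨2*m+1, by omega⟩ : Fin (2*m+1+2)) i) := by
          rw [htu]
        by_cases hT : T (⟨2*m+1, by omega⟩ : Fin (2*m+1+2)) i
        · have e2 : tu ⟨i.val, hi⟩ = true := by simp [e1, hT]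
          refine iff_of_false (fun h => (htot i _ hij).mp h hT) ?_
          cases h4 : tv ⟨i.val, hi⟩ <;> simp only [e2, cA, cB] <;> split_ifs <;> omega
        · have e2 : tu ⟨i.val, hi⟩ = false := by simp [e1, hT]
          refine iff_of_true ((htot i _ hij).mpr hT) ?_
          cases h4 : tv ⟨i.val, hi⟩ <;> simp only [e2, cA, cB] <;> split_ifs <;> omega
      · -- CASE 3 : i old, j = V
        have hj3 : j.val = 2*m+2 := by have := j.isLt; omega
        obtain rfl : j = (⟨2*m+2, pV⟩ : Fin (2*m+1+2)) := Fin.ext hj3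
        simp only [Fin.val_mk]
        have hov : ∀ a : Fin (2*m+1), sv m τ tu tv tuv a.val (2*m+2) =
            (if a.val < m then 0 else if a.val < 2*m then (Finset.univ.sup (τ a)) + 3
             else if tuv then 0 else 1) := sv_ov m τ tu tv tuv
        have hoo2 : ∀ a : Fin (2*m+1), sv m τ tu tv tuv a.val i.val = τ a ⟨i.val, hi⟩ + 2 :=
          fun a => sv_oo m τ tu tv tuv a ⟨i.val, hi⟩
        have hAv : sv m τ tu tv tuv (2*m+1) (2*m+2) = 4*(2*m+1) := sv_Av m τ tu tv tuv
        have hAi : sv m τ tu tv tuv (2*m+1) i.val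
            = cA (tu ⟨i.val, hi⟩) (tv ⟨i.val, hi⟩) * (2*m+1) + i.val :=
          sv_Ao m τ tu tv tuv ⟨i.val, hi⟩
        have hBv : sv m τ tu tv tuv (2*m+2) (2*m+2) = 3*(2*m+1) := sv_Bv m τ tu tv tuv
        have hBi : sv m τ tu tv tuv (2*m+2) i.val
            = cB (tu ⟨i.val, hi⟩) (tv ⟨i.val, hi⟩) * (2*m+1) + (2*m - i.val) :=
          sv_Bo m τ tu tv tuv ⟨i.val, hi⟩
        simp only [hov, hoo2, hAv, hAi, hBv, hBi]
        rw [card_congr_helper _ (fun a => ¬(m ≤ a.val ∧ a.val < 2*m)) (fun a => by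
          have hb := Finset.le_sup (f := τ a) (Finset.mem_univ (⟨i.val, hi⟩ : Fin (2*m+1)))
          have ha2 := a.isLt
          split_ifs <;> omega)]
        rw [card_filter_notIco _ _ _ (by omega)]
        have e1 : tv ⟨i.val, hi⟩ = decide (T (⟨2*m+2, by omega⟩ : Fin (2*m+1+2)) i) := by
          rw [htv]
        by_cases hT : T (⟨2*m+2, by omega⟩ : Fin (2*m+1+2)) i
        · have e2 : tv ⟨i.val, hi⟩ = true := by simp [e1, hT]
          refine iff_of_false (fun h => (htot i _ hij).mp h hT) ?_
          cases h3 : tu ⟨i.val, hi⟩ <;> simp only [e2, cA, cB] <;> split_ifs <;> omega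
        · have e2 : tv ⟨i.val, hi⟩ = false := by simp [e1, hT]
          refine iff_of_true ((htot i _ hij).mpr hT) ?_
          cases h3 : tu ⟨i.val, hi⟩ <;> simp only [e2, cA, cB] <;> split_ifs <;> omega
  · by_cases hi2 : i.val = 2*m+1
    · -- i = U
      obtain rfl : i = (⟨2*m+1, pU⟩ : Fin (2*m+1+2)) := Fin.ext hi2
      simp only [Fin.val_mk]
      by_cases hj : j.val < 2*m+1
      · -- CASE 4a : i = U, j old
        have hou : ∀ a : Fin (2*m+1), sv m τ tu tv tuv a.val (2*m+1) =
            (if a.val < m then (Finset.univ.sup (τ a)) + 3 else if a.val < 2*m then 0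
             else if tuv then 1 else 0) := sv_ou m τ tu tv tuv
        have hoo1 : ∀ a : Fin (2*m+1), sv m τ tu tv tuv a.val j.val = τ a ⟨j.val, hj⟩ + 2 :=
          fun a => sv_oo m τ tu tv tuv a ⟨j.val, hj⟩
        have hAu : sv m τ tu tv tuv (2*m+1) (2*m+1) = 2*(2*m+1) := sv_Au m τ tu tv tuv
        have hAj : sv m τ tu tv tuv (2*m+1) j.val
            = cA (tu ⟨j.val, hj⟩) (tv ⟨j.val, hj⟩) * (2*m+1) + j.val :=
          sv_Ao m τ tu tv tuv ⟨j.val, hj⟩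
        have hBu : sv m τ tu tv tuv (2*m+2) (2*m+1) = 6*(2*m+1) := sv_Bu m τ tu tv tuv
        have hBj : sv m τ tu tv tuv (2*m+2) j.val
            = cB (tu ⟨j.val, hj⟩) (tv ⟨j.val, hj⟩) * (2*m+1) + (2*m - j.val) :=
          sv_Bo m τ tu tv tuv ⟨j.val, hj⟩
        simp only [hou, hoo1, hAu, hAj, hBu, hBj]
        rw [card_congr_helper _ (fun a => 0 ≤ a.val ∧ a.val < m) (fun a => by
          have hb := Finset.le_sup (f := τ a) (Finset.mem_univ (⟨j.val, hj⟩ : Fin (2*m+1)))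
          have ha2 := a.isLt
          split_ifs <;> omega)]
        rw [card_filter_Ico _ _ _ (by omega)]
        have e1 : tu ⟨j.val, hj⟩ = decide (T (⟨2*m+1, by omega⟩ : Fin (2*m+1+2)) j) := by
          rw [htu]
        by_cases hT : T (⟨2*m+1, by omega⟩ : Fin (2*m+1+2)) j
        · have e2 : tu ⟨j.val, hj⟩ = true := by simp [e1, hT]
          refine iff_of_true hT ?_
          cases h4 : tv ⟨j.val, hj⟩ <;> simp only [e2, cA, cB] <;> split_ifs <;> omega
        · have e2 : tu ⟨j.val, hj⟩ = false := by simp [e1, hT]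
          refine iff_of_false hT ?_
          cases h4 : tv ⟨j.val, hj⟩ <;> simp only [e2, cA, cB] <;> split_ifs <;> omega
      · -- CASE 4b : i = U, j = V   (j.val must be 2m+2 since j ≠ i)
        have hj2 : j.val = 2*m+2 := by
          have := j.isLt
          have : j.val ≠ 2*m+1 := fun h => hij (Fin.ext (by omega))
          omega
        obtain rfl : j = (⟨2*m+2, pV⟩ : Fin (2*m+1+2)) := Fin.ext hj2
        simp only [Fin.val_mk]
        have hou : ∀ a : Fin (2*m+1), sv m τ tu tv tuv a.val (2*m+1) =
            (if a.val < m then (Finset.univ.sup (τ a)) + 3 else if a.val < 2*m then 0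
             else if tuv then 1 else 0) := sv_ou m τ tu tv tuv
        have hov : ∀ a : Fin (2*m+1), sv m τ tu tv tuv a.val (2*m+2) =
            (if a.val < m then 0 else if a.val < 2*m then (Finset.univ.sup (τ a)) + 3
             else if tuv then 0 else 1) := sv_ov m τ tu tv tuv
        have hAu : sv m τ tu tv tuv (2*m+1) (2*m+1) = 2*(2*m+1) := sv_Au m τ tu tv tuv
        have hAv : sv m τ tu tv tuv (2*m+1) (2*m+2) = 4*(2*m+1) := sv_Av m τ tu tv tuv
        have hBu : sv m τ tu tv tuv (2*m+2) (2*m+1) = 6*(2*m+1) := sv_Bu m τ tu tv tuv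
        have hBv : sv m τ tu tv tuv (2*m+2) (2*m+2) = 3*(2*m+1) := sv_Bv m τ tu tv tuv
        simp only [hou, hov, hAu, hAv, hBu, hBv]
        have e1 : tuv = decide (T (⟨2*m+1, by omega⟩ : Fin (2*m+1+2))
            (⟨2*m+2, by omega⟩ : Fin (2*m+1+2))) := by rw [htuv]
        by_cases hT : T (⟨2*m+1, by omega⟩ : Fin (2*m+1+2)) (⟨2*m+2, by omega⟩ : Fin (2*m+1+2))
        · have e2 : tuv = true := by simp [e1, hT]
          rw [card_congr_helper _ (fun a => ¬(m ≤ a.val ∧ a.val < 2*m)) (fun a => by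
            have ha2 := a.isLt
            simp only [e2, Bool.false_eq_true, if_false, if_true]
            split_ifs <;> omega)]
          rw [card_filter_notIco _ _ _ (by omega)]
          refine iff_of_true hT ?_
          split_ifs <;> omega
        · have e2 : tuv = false := by simp [e1, hT]
          rw [card_congr_helper _ (fun a => 0 ≤ a.val ∧ a.val < m) (fun a => by
            have ha2 := a.isLt
            simp only [e2, Bool.false_eq_true, if_false, if_true]
            split_ifs <;> omega)]
          rw [card_filter_Ico _ _ _ (by omega)]
          refine iff_of_false hT ?_
          split_ifs <;> omega
    · -- i = V
      have hi3 : i.val = 2*m+2 := by have := i.isLt; omega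
      obtain rfl : i = (⟨2*m+2, pV⟩ : Fin (2*m+1+2)) := Fin.ext hi3
      simp only [Fin.val_mk]
      by_cases hj : j.val < 2*m+1
      · -- CASE 5a : i = V, j old
        have hov : ∀ a : Fin (2*m+1), sv m τ tu tv tuv a.val (2*m+2) =
            (if a.val < m then 0 else if a.val < 2*m then (Finset.univ.sup (τ a)) + 3
             else if tuv then 0 else 1) := sv_ov m τ tu tv tuv
        have hoo1 : ∀ a : Fin (2*m+1), sv m τ tu tv tuv a.val j.val = τ a ⟨j.val, hj⟩ + 2 :=
          fun a => sv_oo m τ tu tv tuv a ⟨j.val, hj⟩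
        have hAv : sv m τ tu tv tuv (2*m+1) (2*m+2) = 4*(2*m+1) := sv_Av m τ tu tv tuv
        have hAj : sv m τ tu tv tuv (2*m+1) j.val
            = cA (tu ⟨j.val, hj⟩) (tv ⟨j.val, hj⟩) * (2*m+1) + j.val :=
          sv_Ao m τ tu tv tuv ⟨j.val, hj⟩
        have hBv : sv m τ tu tv tuv (2*m+2) (2*m+2) = 3*(2*m+1) := sv_Bv m τ tu tv tuv
        have hBj : sv m τ tu tv tuv (2*m+2) j.val
            = cB (tu ⟨j.val, hj⟩) (tv ⟨j.val, hj⟩) * (2*m+1) + (2*m - j.val) :=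
          sv_Bo m τ tu tv tuv ⟨j.val, hj⟩
        simp only [hov, hoo1, hAv, hAj, hBv, hBj]
        rw [card_congr_helper _ (fun a => m ≤ a.val ∧ a.val < 2*m) (fun a => by
          have hb := Finset.le_sup (f := τ a) (Finset.mem_univ (⟨j.val, hj⟩ : Fin (2*m+1)))
          have ha2 := a.isLt
          split_ifs <;> omega)]
        rw [card_filter_Ico _ _ _ (by omega)]
        have e1 : tv ⟨j.val, hj⟩ = decide (T (⟨2*m+2, by omega⟩ : Fin (2*m+1+2)) j) := by
          rw [htv]
        by_cases hT : T (⟨2*m+2, by omega⟩ : Fin (2*m+1+2)) j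
        · have e2 : tv ⟨j.val, hj⟩ = true := by simp [e1, hT]
          refine iff_of_true hT ?_
          cases h3 : tu ⟨j.val, hj⟩ <;> simp only [e2, cA, cB] <;> split_ifs <;> omega
        · have e2 : tv ⟨j.val, hj⟩ = false := by simp [e1, hT]
          refine iff_of_false hT ?_
          cases h3 : tu ⟨j.val, hj⟩ <;> simp only [e2, cA, cB] <;> split_ifs <;> omega
      · -- CASE 5b : i = V, j = U
        have hj2 : j.val = 2*m+1 := by
          have := j.isLt
          have : j.val ≠ 2*m+2 := fun h => hij (Fin.ext (by omega))
          omega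
        obtain rfl : j = (⟨2*m+1, pU⟩ : Fin (2*m+1+2)) := Fin.ext hj2
        simp only [Fin.val_mk]
        have hou : ∀ a : Fin (2*m+1), sv m τ tu tv tuv a.val (2*m+1) =
            (if a.val < m then (Finset.univ.sup (τ a)) + 3 else if a.val < 2*m then 0
             else if tuv then 1 else 0) := sv_ou m τ tu tv tuv
        have hov : ∀ a : Fin (2*m+1), sv m τ tu tv tuv a.val (2*m+2) =
            (if a.val < m then 0 else if a.val < 2*m then (Finset.univ.sup (τ a)) + 3
             else if tuv then 0 else 1) := sv_ov m τ tu tv tuv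
        have hAu : sv m τ tu tv tuv (2*m+1) (2*m+1) = 2*(2*m+1) := sv_Au m τ tu tv tuv
        have hAv : sv m τ tu tv tuv (2*m+1) (2*m+2) = 4*(2*m+1) := sv_Av m τ tu tv tuv
        have hBu : sv m τ tu tv tuv (2*m+2) (2*m+1) = 6*(2*m+1) := sv_Bu m τ tu tv tuv
        have hBv : sv m τ tu tv tuv (2*m+2) (2*m+2) = 3*(2*m+1) := sv_Bv m τ tu tv tuv
        simp only [hou, hov, hAu, hAv, hBu, hBv]
        have e1 : tuv = decide (T (⟨2*m+1, by omega⟩ : Fin (2*m+1+2))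
            (⟨2*m+2, by omega⟩ : Fin (2*m+1+2))) := by rw [htuv]
        by_cases hT : T (⟨2*m+1, by omega⟩ : Fin (2*m+1+2)) (⟨2*m+2, by omega⟩ : Fin (2*m+1+2))
        · have e2 : tuv = true := by simp [e1, hT]
          rw [card_congr_helper _ (fun a => m ≤ a.val ∧ a.val < 2*m) (fun a => by
            have ha2 := a.isLt
            simp only [e2, Bool.false_eq_true, if_false, if_true]
            split_ifs <;> omega)]
          rw [card_filter_Ico _ _ _ (by omega)]
          refine iff_of_false (fun h => (htot _ _ hij).mp h hT) ?_
          split_ifs <;> omega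
        · have e2 : tuv = false := by simp [e1, hT]
          rw [card_congr_helper _ (fun a => m ≤ a.val ∧ a.val < 2*m+1) (fun a => by
            have ha2 := a.isLt
            simp only [e2, Bool.false_eq_true, if_false, if_true]
            split_ifs <;> omega)]
          rw [card_filter_Ico _ _ _ (by omega)]
          refine iff_of_true ((htot _ _ hij).mpr hT) ?_
          split_ifs <;> omega

lemma vp_odd (m : ℕ) : VP (2*m+1) := by
  induction m with
  | zero => exact vp_one
  | succ k ih =>
      have h : 2*(k+1)+1 = 2*k+1+2 := by ring
      rw [h]
      exact vp_step k ih

/-- The number of face wins of die `D` over die `E`: the number of pairs `(a, b)`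
of faces with `D a > E b`. -/
def faceWins (k : ℕ) (D E : Fin k → ℕ) : ℕ :=
  (Finset.univ.filter (fun p : Fin k × Fin k => D p.1 > E p.2)).card

/-- For `n` odd and positive, every tournament on `n` vertices is realized by a set of
`n` dice with `n` sides each. -/
theorem tournament_realized_by_dice_odd (n : ℕ) (hn : 0 < n) (hodd : Odd n)
    (T : Fin n → Fin n → Prop)
    (hirr : ∀ i, ¬ T i i)
    (htot : ∀ i j : Fin n, i ≠ j → (T i j ↔ ¬ T j i)) :
    ∃ X : Fin n → Fin n → ℕ,
      ∀ i j : Fin n, i ≠ j → (T i j ↔ 2 * faceWins n (X i) (X j) > n ^ 2) := by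
  obtain ⟨m, hm⟩ := hodd
  have hm' : n = 2*m+1 := by omega
  subst hm'
  obtain ⟨σ, hσ⟩ := vp_odd m T htot
  set K := (Finset.univ.sup fun a : Fin (2*m+1) => Finset.univ.sup (σ a)) + 1 with hK
  have hKb : ∀ (a i : Fin (2*m+1)), σ a i < K := by
    intro a i
    have h1 : σ a i ≤ Finset.univ.sup (σ a) := Finset.le_sup (Finset.mem_univ i)
    have h2 : Finset.univ.sup (σ a)
        ≤ Finset.univ.sup fun a : Fin (2*m+1) => Finset.univ.sup (σ a) :=
      Finset.le_sup (f := fun a : Fin (2*m+1) => Finset.univ.sup (σ a)) (Finset.mem_univ a)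
    omega
  have hmul : ∀ x y : ℕ, x < y → K * x + K ≤ K * y := by
    intro x y hxy
    have h := Nat.mul_le_mul_left K hxy
    have h3 : K * (x+1) ≤ K * y := h
    have h2 : K * (x+1) = K * x + K := by ring
    omega
  refine ⟨fun i a => K * a.val + σ a i, ?_⟩
  intro i j hij
  show T i j ↔ 2 * (Finset.univ.filter
      (fun p : Fin (2*m+1) × Fin (2*m+1) =>
        K * p.2.val + σ p.2 j < K * p.1.val + σ p.1 i)).card > (2*m+1) ^ 2
  have hcomp : ∀ p : Fin (2*m+1) × Fin (2*m+1),
      (K * p.2.val + σ p.2 j < K * p.1.val + σ p.1 i) ↔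
      (p.2.val < p.1.val ∨ (p.1 = p.2 ∧ σ p.1 j < σ p.1 i)) := by
    intro p
    constructor
    · intro h
      by_cases h12 : p.1.val = p.2.val
      · refine Or.inr ⟨Fin.ext h12, ?_⟩
        have hobs : p.2 = p.1 := Fin.ext h12.symm
        rw [hobs] at h
        omega
      · refine Or.inl ?_
        by_contra hc
        have hlt : p.1.val < p.2.val := by omega
        have := hmul p.1.val p.2.val hlt
        have := hKb p.1 i
        have := hKb p.2 j
        omega
    · intro h
      rcases h with h | ⟨hd1, hd2⟩
      · have := hmul p.2.val p.1.val h
        have := hKb p.1 i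
        have := hKb p.2 j
        omega
      · rw [hd1] at hd2 ⊢
        omega
  have hsplit : (Finset.univ.filter
      (fun p : Fin (2*m+1) × Fin (2*m+1) =>
        K * p.2.val + σ p.2 j < K * p.1.val + σ p.1 i))
      = (Finset.univ.filter (fun p : Fin (2*m+1) × Fin (2*m+1) => p.2.val < p.1.val))
        ∪ (Finset.univ.filter (fun p : Fin (2*m+1) × Fin (2*m+1) =>
            p.1 = p.2 ∧ σ p.1 j < σ p.1 i)) := by
    rw [← Finset.filter_or]
    exact Finset.filter_congr (fun p _ => hcomp p)
  have hdisj : Disjoint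
      (Finset.univ.filter (fun p : Fin (2*m+1) × Fin (2*m+1) => p.2.val < p.1.val))
      (Finset.univ.filter (fun p : Fin (2*m+1) × Fin (2*m+1) =>
          p.1 = p.2 ∧ σ p.1 j < σ p.1 i)) := by
    rw [Finset.disjoint_left]
    intro p hp1 hp2
    simp only [Finset.mem_filter] at hp1 hp2
    have h1 := hp1.2
    have h2 : p.1.val = p.2.val := congrArg Fin.val hp2.2.1
    omega
  have hdiag : (Finset.univ.filter (fun p : Fin (2*m+1) × Fin (2*m+1) =>
      p.1 = p.2 ∧ σ p.1 j < σ p.1 i)).card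
      = (Finset.univ.filter (fun a : Fin (2*m+1) => σ a j < σ a i)).card := by
    apply Finset.card_bij (fun p _ => p.1)
    · intro p hp
      simp only [Finset.mem_filter] at hp ⊢
      exact ⟨Finset.mem_univ _, hp.2.2⟩
    · intro p hp q hq h
      simp only [Finset.mem_filter] at hp hq
      exact Prod.ext_iff.mpr ⟨h, (hp.2.1.symm.trans h).trans hq.2.1⟩
    · intro a ha
      simp only [Finset.mem_filter] at ha
      exact ⟨(a, a), by simp [ha.2], rfl⟩
  have hswap : (Finset.univ.filter
        (fun p : Fin (2*m+1) × Fin (2*m+1) => p.2.val < p.1.val)).card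
      = (Finset.univ.filter
        (fun p : Fin (2*m+1) × Fin (2*m+1) => p.1.val < p.2.val)).card := by
    apply Finset.card_bij (fun p _ => p.swap)
    · intro p hp
      simp only [Finset.mem_filter] at hp ⊢
      exact ⟨Finset.mem_univ _, hp.2⟩
    · intro p _ q _ h
      simpa using congrArg Prod.swap h
    · intro b hb
      simp only [Finset.mem_filter] at hb
      refine ⟨b.swap, ?_, by simp⟩
      simp only [Finset.mem_filter, Finset.mem_univ, true_and, Prod.fst_swap, Prod.snd_swap]
      exact hb.2
  have hdiag2 : (Finset.univ.filter
      (fun p : Fin (2*m+1) × Fin (2*m+1) => p.1.val = p.2.val)).card = 2*m+1 := by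
    have hh : (Finset.univ.filter
        (fun p : Fin (2*m+1) × Fin (2*m+1) => p.1.val = p.2.val)).card
        = (Finset.univ : Finset (Fin (2*m+1))).card := by
      apply Finset.card_bij (fun p _ => p.1)
      · intro p _; exact Finset.mem_univ _
      · intro p hp q hq h
        simp only [Finset.mem_filter] at hp hq
        refine Prod.ext_iff.mpr ⟨h, Fin.ext ?_⟩
        have h1 := hp.2
        have h2 := hq.2
        have h3 := congrArg Fin.val h
        omega
      · intro a _
        exact ⟨(a, a), by simp, rfl⟩
    rw [hh]
    simp
  have hnot : (Finset.univ.filter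
      (fun p : Fin (2*m+1) × Fin (2*m+1) => ¬(p.2.val < p.1.val)))
      = (Finset.univ.filter (fun p : Fin (2*m+1) × Fin (2*m+1) => p.1.val < p.2.val))
        ∪ (Finset.univ.filter (fun p : Fin (2*m+1) × Fin (2*m+1) => p.1.val = p.2.val)) := by
    rw [← Finset.filter_or]
    exact Finset.filter_congr (fun p _ => by omega)
  have hdisj2 : Disjoint
      (Finset.univ.filter (fun p : Fin (2*m+1) × Fin (2*m+1) => p.1.val < p.2.val))
      (Finset.univ.filter (fun p : Fin (2*m+1) × Fin (2*m+1) => p.1.val = p.2.val)) := by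
    rw [Finset.disjoint_left]
    intro p hp1 hp2
    simp only [Finset.mem_filter] at hp1 hp2
    omega
  have htotal := Finset.card_filter_add_card_filter_not
    (s := (Finset.univ : Finset (Fin (2*m+1) × Fin (2*m+1))))
    (p := fun p => p.2.val < p.1.val)
  rw [hnot, Finset.card_union_of_disjoint hdisj2, hdiag2, hswap] at htotal
  simp only [Finset.card_univ, Fintype.card_prod, Fintype.card_fin] at htotal
  rw [hsplit, Finset.card_union_of_disjoint hdisj, hdiag]
  rw [hσ i j hij, pow_two]
  have hQN : (2*m+1 : ℕ) ≤ (2*m+1) * (2*m+1) := Nat.le_mul_of_pos_left _ (by omega)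
  omega
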